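/- The group Γ is isomorphic to the semidirect product (ℤ/3 × ℤ/3) ⋊ ℤ/2, where the nontrivial element of ℤ/2 acts on ℤ/3 × ℤ/3 by swapping the two factors. -/

import Mathlib

open MvPolynomial

/-- Substitution of a 2×2 matrix into a polynomial in two variables:
`tᵢ ↦ gᵢ₁ t₁ + gᵢ₂ t₂`. -/
noncomputable def bsub (g : Matrix (Fin 2) (Fin 2) ℂ) (p : MvPolynomial (Fin 2) ℂ) :
    MvPolynomial (Fin 2) ℂ :=
  aeval (fun i => C (g i 0) * X 0 + C (g i 1) * X 1) p

lemma bsub_one (p : MvPolynomial (Fin 2) ℂ) : bsub 1 p = p := by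
  have : (fun i => C ((1 : Matrix (Fin 2) (Fin 2) ℂ) i 0) * X 0
      + C ((1 : Matrix (Fin 2) (Fin 2) ℂ) i 1) * X 1) = (X : Fin 2 → MvPolynomial (Fin 2) ℂ) := by
    funext i
    fin_cases i <;> simp [Matrix.one_apply]
  rw [bsub, this, aeval_X_left_apply]

lemma bsub_mul (g h : Matrix (Fin 2) (Fin 2) ℂ) (p : MvPolynomial (Fin 2) ℂ) :
    bsub (g * h) p = bsub h (bsub g p) := by
  unfold bsub
  rw [← AlgHom.comp_apply]
  refine DFunLike.congr_fun ?_ p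
  apply algHom_ext
  intro i
  simp [Matrix.mul_apply, Fin.sum_univ_two]
  ring

/-- The binary cubic `t₁³ + t₂³`. -/
noncomputable def cubicDiag : MvPolynomial (Fin 2) ℂ := X 0 ^ 3 + X 1 ^ 3

/-- The stabilizer `Γ` of the binary cubic `t₁³ + t₂³` in `GL₂(ℂ)`. -/
noncomputable def Gamma : Subgroup (GL (Fin 2) ℂ) where
  carrier := {g | bsub (↑g) cubicDiag = cubicDiag}
  one_mem' := bsub_one _
  mul_mem' := by
    intro g h hg hh
    show bsub (↑(g * h)) cubicDiag = cubicDiag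
    rw [Units.val_mul, bsub_mul, hg, hh]
  inv_mem' := by
    intro g hg
    show bsub (↑g⁻¹) cubicDiag = cubicDiag
    have hg' : bsub (↑g) cubicDiag = cubicDiag := hg
    have h1 : bsub ((↑g : Matrix (Fin 2) (Fin 2) ℂ) * (↑g⁻¹ : Matrix (Fin 2) (Fin 2) ℂ)) cubicDiag
        = bsub (↑g⁻¹ : Matrix (Fin 2) (Fin 2) ℂ) cubicDiag := by
      rw [bsub_mul, hg']
    have h2 : (↑g : Matrix (Fin 2) (Fin 2) ℂ) * (↑g⁻¹ : Matrix (Fin 2) (Fin 2) ℂ) = 1 := by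
      rw [← Units.val_mul, mul_inv_cancel, Units.val_one]
    rw [← h1, h2, bsub_one]

noncomputable def ww : ℂ := Complex.exp (2 * Real.pi * Complex.I / 3)
lemma hww : IsPrimitiveRoot ww 3 := Complex.isPrimitiveRoot_exp 3 (by norm_num)
lemma ww3 : ww ^ 3 = 1 := hww.pow_eq_one
noncomputable def χ (k : ZMod 3) : ℂ := ww ^ k.val
lemma χ_zero : χ 0 = 1 := by simp [χ]
lemma χ_add (a b : ZMod 3) : χ (a + b) = χ a * χ b := by
  unfold χ
  rw [← pow_add, ZMod.val_add, ← pow_eq_pow_mod _ ww3]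
lemma χ_cube (k : ZMod 3) : χ k ^ 3 = 1 := by
  unfold χ; rw [← pow_mul, mul_comm, pow_mul, ww3, one_pow]
lemma χ_ne_zero (k : ZMod 3) : χ k ≠ 0 :=
  pow_ne_zero _ (hww.ne_zero (by norm_num))
lemma χ_eq_one {k : ZMod 3} (h : χ k = 1) : k = 0 := by
  have h3 : (3:ℕ) ∣ k.val := (hww.pow_eq_one_iff_dvd _).mp h
  have : k.val < 3 := k.val_lt
  interval_cases h' : k.val
  · exact (ZMod.val_eq_zero _).mp h'  -- maybe wrong name
  all_goals omega
lemma χ_surj {z : ℂ} (hz : z ^ 3 = 1) : ∃ k : ZMod 3, χ k = z := by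
  obtain ⟨i, hi, hzi⟩ := hww.eq_pow_of_pow_eq_one hz
  exact ⟨(i : ZMod 3), by rwa [χ, ZMod.val_cast_of_lt hi]⟩
abbrev M3 := Multiplicative (ZMod 3) × Multiplicative (ZMod 3)

def φ0 : Multiplicative (ZMod 2) →* MulAut M3 where
  toFun s := if Multiplicative.toAdd s = 0 then 1 else MulEquiv.prodComm
  map_one' := by simp
  map_mul' := by
    have hsw : (MulEquiv.prodComm : MulAut M3) * MulEquiv.prodComm = 1 :=
      MulEquiv.ext fun z => rfl
    intro x y
    have h2 : ∀ z : ZMod 2, z = 0 ∨ z = 1 := by decide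
    rcases h2 (Multiplicative.toAdd x) with hx | hx <;>
      rcases h2 (Multiplicative.toAdd y) with hy | hy <;>
      simp [toAdd_mul, hx, hy, hsw, (by decide : (1:ZMod 2)+1 = 0)]

example : φ0 (Multiplicative.ofAdd 1) = MulEquiv.prodComm := by
  simp [φ0]

noncomputable def mmat (m : ZMod 3 × ZMod 3) (s : ZMod 2) : Matrix (Fin 2) (Fin 2) ℂ :=
  if s = 0 then !![χ m.1, 0; 0, χ m.2] else !![0, χ m.1; χ m.2, 0]

lemma mmat_mul_dd (m m' : ZMod 3 × ZMod 3) :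
    mmat m 0 * mmat m' 0 = mmat (m.1 + m'.1, m.2 + m'.2) 0 := by
  simp [mmat, Matrix.mul_fin_two, χ_add]

lemma mmat_mul_da (m m' : ZMod 3 × ZMod 3) :
    mmat m 0 * mmat m' 1 = mmat (m.1 + m'.1, m.2 + m'.2) 1 := by
  simp [mmat, Matrix.mul_fin_two, χ_add]

lemma mmat_mul_ad (m m' : ZMod 3 × ZMod 3) :
    mmat m 1 * mmat m' 0 = mmat (m.1 + m'.2, m.2 + m'.1) 1 := by
  simp [mmat, Matrix.mul_fin_two, χ_add, mul_comm]

lemma mmat_mul_aa (m m' : ZMod 3 × ZMod 3) :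
    mmat m 1 * mmat m' 1 = mmat (m.1 + m'.2, m.2 + m'.1) 0 := by
  simp [mmat, Matrix.mul_fin_two, χ_add, mul_comm]

lemma mmat_zero : mmat (0, 0) 0 = 1 := by
  simp [mmat, χ_zero]
  ext i j
  fin_cases i <;> fin_cases j <;> simp [Matrix.one_apply]

noncomputable def gmat (m : ZMod 3 × ZMod 3) (s : ZMod 2) : GL (Fin 2) ℂ where
  val := mmat m s
  inv := mmat (if s = 0 then (-m.1, -m.2) else (-m.2, -m.1)) s
  val_inv := by
    have h2 : s = 0 ∨ s = 1 := by revert s; decide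
    rcases h2 with h | h <;> subst h
    · rw [mmat_mul_dd]; simpa using mmat_zero
    · rw [if_neg (by decide), mmat_mul_aa]; simpa using mmat_zero
  inv_val := by
    have h2 : s = 0 ∨ s = 1 := by revert s; decide
    rcases h2 with h | h <;> subst h
    · rw [mmat_mul_dd]; simpa using mmat_zero
    · rw [if_neg (by decide), mmat_mul_aa]; simpa using mmat_zero


lemma gmat_mem (m : ZMod 3 × ZMod 3) (s : ZMod 2) : gmat m s ∈ Gamma := by
  have h2 : s = 0 ∨ s = 1 := by revert s; decide
  show bsub (mmat m s) cubicDiag = cubicDiag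
  rcases h2 with h | h <;> subst h <;>
    simp [bsub, cubicDiag, mmat, mul_pow, ← C_pow, χ_cube] <;> ring

lemma gmat_dd (m m' : ZMod 3 × ZMod 3) :
    gmat m 0 * gmat m' 0 = gmat (m.1 + m'.1, m.2 + m'.2) 0 := Units.ext (mmat_mul_dd m m')
lemma gmat_da (m m' : ZMod 3 × ZMod 3) :
    gmat m 0 * gmat m' 1 = gmat (m.1 + m'.1, m.2 + m'.2) 1 := Units.ext (mmat_mul_da m m')
lemma gmat_ad (m m' : ZMod 3 × ZMod 3) :
    gmat m 1 * gmat m' 0 = gmat (m.1 + m'.2, m.2 + m'.1) 1 := Units.ext (mmat_mul_ad m m')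
lemma gmat_aa (m m' : ZMod 3 × ZMod 3) :
    gmat m 1 * gmat m' 1 = gmat (m.1 + m'.2, m.2 + m'.1) 0 := Units.ext (mmat_mul_aa m m')
lemma gmat_zero : gmat (0, 0) 0 = 1 := Units.ext mmat_zero

lemma φ0_apply_zero {s : Multiplicative (ZMod 2)} (h : Multiplicative.toAdd s = 0)
    (z : M3) : φ0 s z = z := by
  have hs : s = 1 := by simpa using h
  subst hs; simp [φ0]
lemma φ0_apply_one {s : Multiplicative (ZMod 2)} (h : Multiplicative.toAdd s = 1)
    (z : M3) : φ0 s z = (z.2, z.1) := by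
  have hs : s = Multiplicative.ofAdd 1 := by rw [← ofAdd_toAdd s, h]
  subst hs; simp [φ0, (by decide : (1:ZMod 2) ≠ 0), Prod.swap]

noncomputable def ψ : SemidirectProduct M3 (Multiplicative (ZMod 2)) φ0 →* Gamma where
  toFun x := ⟨gmat (Multiplicative.toAdd x.left.1, Multiplicative.toAdd x.left.2)
      (Multiplicative.toAdd x.right), gmat_mem _ _⟩
  map_one' := Subtype.ext gmat_zero
  map_mul' := by
    intro x y
    refine Subtype.ext ?_
    show gmat (Multiplicative.toAdd (x * y).left.1, Multiplicative.toAdd (x * y).left.2)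
        (Multiplicative.toAdd (x * y).right) = gmat _ _ * gmat _ _
    have h2 : ∀ z : ZMod 2, z = 0 ∨ z = 1 := by decide
    rcases h2 (Multiplicative.toAdd x.right) with hx | hx <;>
      rcases h2 (Multiplicative.toAdd y.right) with hy | hy
    · rw [hx, hy, gmat_dd]
      simp [SemidirectProduct.mul_left, SemidirectProduct.mul_right, toAdd_mul, hx, hy,
        φ0_apply_zero hx]
    · rw [hx, hy, gmat_da]
      simp [SemidirectProduct.mul_left, SemidirectProduct.mul_right, toAdd_mul, hx, hy,
        φ0_apply_zero hx]
    · rw [hx, hy, gmat_ad]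
      simp [SemidirectProduct.mul_left, SemidirectProduct.mul_right, toAdd_mul, hx, hy,
        φ0_apply_one hx]
    · rw [hx, hy, gmat_aa]
      simp [SemidirectProduct.mul_left, SemidirectProduct.mul_right, toAdd_mul, hx, hy,
        φ0_apply_one hx, (by decide : (1:ZMod 2)+1 = 0)]

lemma ψ_inj : Function.Injective ψ := by
  refine (injective_iff_map_eq_one ψ).mpr ?_
  intro x hx
  have hval : mmat (Multiplicative.toAdd x.left.1, Multiplicative.toAdd x.left.2)
      (Multiplicative.toAdd x.right) = 1 :=
    congrArg (fun g : Gamma => ((g : GL (Fin 2) ℂ) : Matrix (Fin 2) (Fin 2) ℂ)) hx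
  have h2 : ∀ z : ZMod 2, z = 0 ∨ z = 1 := by decide
  rcases h2 (Multiplicative.toAdd x.right) with hs | hs
  · rw [hs] at hval
    have h00 : χ (Multiplicative.toAdd x.left.1) = 1 := by
      have := congrFun (congrFun hval 0) 0
      simpa [mmat, Matrix.one_apply] using this
    have h11 : χ (Multiplicative.toAdd x.left.2) = 1 := by
      have := congrFun (congrFun hval 1) 1
      simpa [mmat, Matrix.one_apply] using this
    have e1 : x.left.1 = 1 := by
      have := χ_eq_one h00
      rwa [← toAdd_eq_zero]
    have e2 : x.left.2 = 1 := by
      have := χ_eq_one h11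
      rwa [← toAdd_eq_zero]
    have e3 : x.right = 1 := by rwa [← toAdd_eq_zero]
    cases x with
    | mk l r =>
      simp only at e1 e2 e3
      ext <;> simp [e1, e2, e3]
  · rw [hs] at hval
    have h00 : (0 : ℂ) = 1 := by
      have := congrFun (congrFun hval 0) 0
      simpa [mmat, Matrix.one_apply] using this
    exact absurd h00 zero_ne_one

lemma classify {a b c d : ℂ} (hdet : a * d - b * c ≠ 0)
    (h30 : a ^ 3 + c ^ 3 = 1) (h03 : b ^ 3 + d ^ 3 = 1)
    (h21 : a ^ 2 * b + c ^ 2 * d = 0) (h12 : a * b ^ 2 + c * d ^ 2 = 0) :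
    (b = 0 ∧ c = 0 ∧ a ^ 3 = 1 ∧ d ^ 3 = 1) ∨
    (a = 0 ∧ d = 0 ∧ b ^ 3 = 1 ∧ c ^ 3 = 1) := by
  by_cases ha : a = 0
  · right
    subst ha
    have hc3 : c ^ 3 = 1 := by linear_combination h30
    have hc : c ≠ 0 := by
      intro h; rw [h] at hc3; simp at hc3
    have hd : d = 0 := by
      have h0 : c ^ 2 * d = 0 := by linear_combination h21
      rcases mul_eq_zero.mp h0 with h | h
      · exact absurd (pow_eq_zero_iff (by norm_num) |>.mp h) hc
      · exact h
    subst hd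
    have hb3 : b ^ 3 = 1 := by linear_combination h03
    exact ⟨rfl, rfl, hb3, hc3⟩
  · by_cases hb : b = 0
    · left
      subst hb
      have hd3 : d ^ 3 = 1 := by linear_combination h03
      have hd : d ≠ 0 := by
        intro h; rw [h] at hd3; simp at hd3
      have hc : c = 0 := by
        have h0 : c * d ^ 2 = 0 := by linear_combination h12
        rcases mul_eq_zero.mp h0 with h | h
        · exact h
        · exact absurd (pow_eq_zero_iff (by norm_num) |>.mp h) hd
      subst hc
      have ha3 : a ^ 3 = 1 := by linear_combination h30
      exact ⟨rfl, rfl, ha3, hd3⟩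
    · exfalso
      have hab : a ^ 3 * b ^ 3 = c ^ 3 * d ^ 3 := by
        linear_combination a * b ^ 2 * h21 - c ^ 2 * d * h12
      have hcd : c ≠ 0 ∧ d ≠ 0 := by
        constructor <;> intro h <;> rw [h] at hab <;>
          simp [pow_eq_zero_iff, ha, hb] at hab <;> tauto
      have h0 : a * b * c * d * (a * d - b * c) = 0 := by
        linear_combination c * d ^ 2 * h21 - c ^ 2 * d * h12
      have := mul_ne_zero (mul_ne_zero (mul_ne_zero (mul_ne_zero ha hb) hcd.1) hcd.2) hdet
      exact this h0

lemma ψ_surj : Function.Surjective ψ := by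
  rintro ⟨g, hg⟩
  have hg' : bsub (↑g) cubicDiag = cubicDiag := hg
  set A : Matrix (Fin 2) (Fin 2) ℂ := ↑g with hA
  have key : ∀ x y : ℂ,
      (A 0 0 * x + A 0 1 * y) ^ 3 + (A 1 0 * x + A 1 1 * y) ^ 3 = x ^ 3 + y ^ 3 := by
    intro x y
    have := congrArg (eval ![x, y]) hg'
    simpa [bsub, cubicDiag] using this
  have hv : A * (↑g⁻¹ : Matrix (Fin 2) (Fin 2) ℂ) = 1 := by
    rw [hA, ← Units.val_mul, mul_inv_cancel, Units.val_one]
  have hdet0 : A.det ≠ 0 := by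
    have := congrArg Matrix.det hv
    rw [Matrix.det_mul, Matrix.det_one] at this
    exact left_ne_zero_of_mul_eq_one this
  have hdet : A 0 0 * A 1 1 - A 0 1 * A 1 0 ≠ 0 := by
    rwa [← Matrix.det_fin_two]
  have h30 : A 0 0 ^ 3 + A 1 0 ^ 3 = 1 := by linear_combination key 1 0
  have h03 : A 0 1 ^ 3 + A 1 1 ^ 3 = 1 := by linear_combination key 0 1
  have h21 : A 0 0 ^ 2 * A 0 1 + A 1 0 ^ 2 * A 1 1 = 0 := by
    linear_combination (key 1 1 - key 1 (-1) - 2 * key 0 1) / 6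
  have h12 : A 0 0 * A 0 1 ^ 2 + A 1 0 * A 1 1 ^ 2 = 0 := by
    linear_combination (key 1 1 + key 1 (-1) - 2 * key 1 0) / 6
  rcases classify hdet h30 h03 h21 h12 with ⟨hb, hc, ha3, hd3⟩ | ⟨ha, hd, hb3, hc3⟩
  · obtain ⟨i, hi⟩ := χ_surj ha3
    obtain ⟨j, hj⟩ := χ_surj hd3
    refine ⟨⟨(Multiplicative.ofAdd i, Multiplicative.ofAdd j), Multiplicative.ofAdd 0⟩, ?_⟩
    refine Subtype.ext (Units.ext ?_)
    show mmat (i, j) 0 = A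
    ext r s
    fin_cases r <;> fin_cases s <;> simp [mmat, hi, hj, hb, hc]
  · obtain ⟨i, hi⟩ := χ_surj hb3
    obtain ⟨j, hj⟩ := χ_surj hc3
    refine ⟨⟨(Multiplicative.ofAdd i, Multiplicative.ofAdd j), Multiplicative.ofAdd 1⟩, ?_⟩
    refine Subtype.ext (Units.ext ?_)
    show mmat (i, j) 1 = A
    ext r s
    fin_cases r <;> fin_cases s <;> simp [mmat, hi, hj, ha, hd]

/-- **`Γ ≅ (ℤ/3 × ℤ/3) ⋊ ℤ/2`** where the nontrivial element of `ℤ/2` acts by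
swapping the two factors. -/
theorem gamma_semidirect_product :
    ∃ φ : Multiplicative (ZMod 2) →*
        MulAut (Multiplicative (ZMod 3) × Multiplicative (ZMod 3)),
      φ (Multiplicative.ofAdd 1) = MulEquiv.prodComm ∧
      Nonempty (Gamma ≃*
        SemidirectProduct (Multiplicative (ZMod 3) × Multiplicative (ZMod 3))
          (Multiplicative (ZMod 2)) φ) := by
  refine ⟨φ0, ?_, ⟨(MulEquiv.ofBijective ψ ⟨ψ_inj, ψ_surj⟩).symm⟩⟩
  simp [φ0]
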